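/- In the three-state counterexample gambling game, assume 0 lies in the closure of I∖{0} and 0 lies in the closure of J∖{0}. Then a function v: X×Y → ℝ is excessive, depressive, and satisfies P1 and P2, if and only if there exists x ∈ [0,1] such that v(a,a') = v(a,b') = v(b,a') = v(b,b') = x, v(a,c') = v(b,c') = 1, and v(c,a') = v(c,b') = v(c,c') = 0. -/

import Mathlib

open MeasureTheory Set Filter Topology

noncomputable section
namespace GG

abbrev PM (S : Type*) [MeasurableSpace S] := MeasureTheory.ProbabilityMeasure S

variable {S : Type*} [MeasurableSpace S]

/-- Dirac probability measure. -/
def dirac (s : S) : PM S := ⟨MeasureTheory.Measure.dirac s, inferInstance⟩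

/-- Integral of a function against a probability measure (the affine extension `f̃`). -/
def iPM (f : S → ℝ) (p : PM S) : ℝ := ∫ s, f s ∂(p : MeasureTheory.Measure S)

/-- `r` is the mixture `t p + (1-t) q`. -/
def IsMix (t : NNReal) (p q r : PM S) : Prop :=
  (r : MeasureTheory.Measure S)
    = (t : ENNReal) • (p : MeasureTheory.Measure S)
      + ((1 : ENNReal) - (t : ENNReal)) • (q : MeasureTheory.Measure S)

/-- Convexity of a set of probability measures. -/
def PMConvex (A : Set (PM S)) : Prop :=
  ∀ p ∈ A, ∀ q ∈ A, ∀ t : NNReal, t ≤ 1 → ∀ r : PM S, IsMix t p q r → r ∈ A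

/-- Convexity of a set of pairs of probability measures. -/
def PMConvex2 (A : Set (PM S × PM S)) : Prop :=
  ∀ a ∈ A, ∀ b ∈ A, ∀ t : NNReal, t ≤ 1 → ∀ c : PM S × PM S,
    IsMix t a.1 b.1 c.1 → IsMix t a.2 b.2 c.2 → c ∈ A

/-- Convex hull of a set of probability measures. -/
def convexHullPM (A : Set (PM S)) : Set (PM S) := ⋂₀ {T | A ⊆ T ∧ PMConvex T}

/-- Convex hull of a set of pairs of probability measures. -/
def convexHull2 (A : Set (PM S × PM S)) : Set (PM S × PM S) := ⋂₀ {T | A ⊆ T ∧ PMConvex2 T}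

/-- Kantorovich–Rubinstein distance. -/
def dKR {S : Type*} [MeasurableSpace S] [PseudoMetricSpace S] (p q : PM S) : ℝ :=
  sSup {r | ∃ f : S → ℝ, LipschitzWith 1 f ∧ r = |iPM f p - iPM f q|}

def argmaxOn {α : Type*} (f : α → ℝ) (A : Set α) : Set α := {p ∈ A | ∀ q ∈ A, f q ≤ f p}

def argminOn {α : Type*} (f : α → ℝ) (A : Set α) : Set α := {p ∈ A | ∀ q ∈ A, f p ≤ f q}

section Topo

variable [TopologicalSpace S] [OpensMeasurableSpace S]

/-- Graph of the linear extension `Γ̃`: the closed convex hull of the graph of `Γ`. -/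
def tGraph (Γ : S → Set (PM S)) : Set (PM S × PM S) :=
  closure (convexHull2 {z | ∃ x : S, z.1 = dirac x ∧ z.2 ∈ Γ x})

/-- The linear extension `Γ̃ : Δ(S) ⇉ Δ(S)`. -/
def tStep (Γ : S → Set (PM S)) (p : PM S) : Set (PM S) := {q | (p, q) ∈ tGraph Γ}

/-- Iterates `Γ̃ⁿ`, with `Γ̃⁰(p) = {p}` and `Γ̃^{n+1} = Γ̃ⁿ ∘ Γ̃`. -/
def tIter (Γ : S → Set (PM S)) : ℕ → PM S → Set (PM S)
  | 0, p => {p}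
  | n + 1, p => {r | ∃ q ∈ tStep Γ p, r ∈ tIter Γ n q}

/-- The reachable set `Γ^∞(x)`: closure of `⋃ₙ Γ̃ⁿ(δ_x)`. -/
def reach (Γ : S → Set (PM S)) (x : S) : Set (PM S) :=
  closure (⋃ n : ℕ, tIter Γ n (dirac x))

/-- There is a bounded measurable lower semicontinuous `φ` whose (expectation) argmax over
`R x` is exactly `{δ_x}`, for every `x`. -/
def AcyclicFor (R : S → Set (PM S)) : Prop :=
  ∃ φ : S → ℝ, Measurable φ ∧ (∃ C : ℝ, ∀ s, |φ s| ≤ C) ∧ LowerSemicontinuous φ ∧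
    ∀ x : S, argmaxOn (iPM φ) (R x) = {dirac x}

/-- There is a bounded measurable upper semicontinuous `ψ` whose (expectation) argmin over
`R y` is exactly `{δ_y}`, for every `y`. -/
def AcyclicForMin (R : S → Set (PM S)) : Prop :=
  ∃ ψ : S → ℝ, Measurable ψ ∧ (∃ C : ℝ, ∀ s, |ψ s| ≤ C) ∧ UpperSemicontinuous ψ ∧
    ∀ y : S, argminOn (iPM ψ) (R y) = {dirac y}

end Topo

section TwoPlayers

variable {X Y : Type*} [MeasurableSpace X] [MeasurableSpace Y]

/-- The bi-affine extension `ṽ(p,q) = ∫∫ v dp dq`. -/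
def iXY (v : X × Y → ℝ) (p : PM X) (q : PM Y) : ℝ :=
  ∫ x, ∫ y, v (x, y) ∂(q : MeasureTheory.Measure Y) ∂(p : MeasureTheory.Measure X)

/-- `v` is excessive: `v(x,y) = max_{p ∈ Γ(x)} ṽ(p,y)`. -/
def Excessive (Γ : X → Set (PM X)) (v : X × Y → ℝ) : Prop :=
  ∀ x : X, ∀ y : Y, IsGreatest ((fun p => iXY v p (dirac y)) '' Γ x) (v (x, y))

/-- `v` is depressive: `v(x,y) = min_{q ∈ Λ(y)} ṽ(x,q)`. -/
def Depressive (Λ : Y → Set (PM Y)) (v : X × Y → ℝ) : Prop :=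
  ∀ x : X, ∀ y : Y, IsLeast ((fun q => iXY v (dirac x) q) '' Λ y) (v (x, y))

/-- `v` is balanced: `v(x,y) = max_{p ∈ Γ(x)} min_{q ∈ Λ(y)} ṽ(p,q)
    = min_{q ∈ Λ(y)} max_{p ∈ Γ(x)} ṽ(p,q)`. -/
def Balanced (Γ : X → Set (PM X)) (Λ : Y → Set (PM Y)) (v : X × Y → ℝ) : Prop :=
  ∀ x : X, ∀ y : Y,
    IsGreatest {r | ∃ p ∈ Γ x, IsLeast (iXY v p '' Λ y) r} (v (x, y)) ∧
    IsLeast {r | ∃ q ∈ Λ y, IsGreatest ((fun p => iXY v p q) '' Γ x) r} (v (x, y))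

variable [TopologicalSpace X] [OpensMeasurableSpace X] [TopologicalSpace Y] [OpensMeasurableSpace Y]

/-- Property P1: for all `(x,y)` there is `p ∈ Γ^∞(x)` with `v(x,y) = ṽ(p,y) ≤ ũ(p,y)`. -/
def P1 (Γ : X → Set (PM X)) (u v : X × Y → ℝ) : Prop :=
  ∀ x : X, ∀ y : Y, ∃ p ∈ reach Γ x,
    v (x, y) = iXY v p (dirac y) ∧ iXY v p (dirac y) ≤ iXY u p (dirac y)

/-- Property P2: for all `(x,y)` there is `q ∈ Λ^∞(y)` with `v(x,y) = ṽ(x,q) ≥ ũ(x,q)`. -/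
def P2 (Λ : Y → Set (PM Y)) (u v : X × Y → ℝ) : Prop :=
  ∀ x : X, ∀ y : Y, ∃ q ∈ reach Λ y,
    v (x, y) = iXY v (dirac x) q ∧ iXY u (dirac x) q ≤ iXY v (dirac x) q

/-- `w` satisfies the Shapley fixed point equation for discount factor `lam`:
`w(x,y) = max_{p∈Γ(x)} min_{q∈Λ(y)} (λ u(x,y) + (1-λ) w̃(p,q))
        = min_{q∈Λ(y)} max_{p∈Γ(x)} (λ u(x,y) + (1-λ) w̃(p,q))`. -/
def ShapleyEq (Γ : X → Set (PM X)) (Λ : Y → Set (PM Y)) (u : X × Y → ℝ)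
    (lam : ℝ) (w : X × Y → ℝ) : Prop :=
  ∀ x : X, ∀ y : Y,
    IsGreatest {r | ∃ p ∈ Γ x,
      IsLeast ((fun q => lam * u (x, y) + (1 - lam) * iXY w p q) '' Λ y) r} (w (x, y)) ∧
    IsLeast {r | ∃ q ∈ Λ y,
      IsGreatest ((fun p => lam * u (x, y) + (1 - lam) * iXY w p q) '' Γ x) r} (w (x, y))

end TwoPlayers

/-- A standard gambling game: compact metric state spaces, continuous payoff,
continuous transition multifunctions with nonempty convex compact values,
leavable and non expansive. -/
structure StdGame (X Y : Type*) [MetricSpace X] [MeasurableSpace X] [OpensMeasurableSpace X]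
    [MetricSpace Y] [MeasurableSpace Y] [OpensMeasurableSpace Y] where
  G : X → Set (PM X)
  L : Y → Set (PM Y)
  u : X × Y → ℝ
  u_cont : Continuous u
  G_ne : ∀ x, (G x).Nonempty
  G_cvx : ∀ x, PMConvex (G x)
  G_cpt : ∀ x, IsCompact (G x)
  G_cont : ∀ ε : ℝ, 0 < ε → ∃ α : ℝ, 0 < α ∧ ∀ x x' : X, dist x x' ≤ α →
    ∀ p ∈ G x, ∃ p' ∈ G x', dKR p p' ≤ ε
  G_leav : ∀ x, dirac x ∈ G x
  G_nonexp : ∀ x x' : X, ∀ p ∈ G x, ∃ p' ∈ G x', dKR p p' ≤ dist x x'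
  L_ne : ∀ y, (L y).Nonempty
  L_cvx : ∀ y, PMConvex (L y)
  L_cpt : ∀ y, IsCompact (L y)
  L_cont : ∀ ε : ℝ, 0 < ε → ∃ α : ℝ, 0 < α ∧ ∀ y y' : Y, dist y y' ≤ α →
    ∀ q ∈ L y, ∃ q' ∈ L y', dKR q q' ≤ ε
  L_leav : ∀ y, dirac y ∈ L y
  L_nonexp : ∀ y y' : Y, ∀ q ∈ L y, ∃ q' ∈ L y', dKR q q' ≤ dist y y'

end GG

namespace GG

/-! The three-state counterexample gambling game. -/

/-- Three states a, b, c (Player 2 uses the primed copy a', b', c' of the same type). -/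
inductive St : Type
  | a | b | c
deriving DecidableEq

instance : Fintype St := ⟨{St.a, St.b, St.c}, fun x => by cases x <;> simp⟩

instance : TopologicalSpace St := ⊥
instance : DiscreteTopology St := ⟨rfl⟩
instance : MeasurableSpace St := ⊤
instance : BorelSpace St := ⟨(borel_eq_top_of_discrete (α := St)).symm⟩

/-- Generator: probability measures of the form
(1 - t - t^2) delta_x + t delta_y + t^2 delta_z for t in the parameter set I. -/
def gen (x y z : St) (I : Set ℝ) : Set (PM St) :=
  {p | ∃ t ∈ I, ((p {x} : NNReal) : ℝ) = 1 - t - t ^ 2 ∧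
    ((p {y} : NNReal) : ℝ) = t ∧ ((p {z} : NNReal) : ℝ) = t ^ 2}

/-- The transition multifunction of the counterexample, for the parameter set I:
Gam(c) = {delta_c}, Gam(a) = conv gen(a,b,c), Gam(b) = conv gen(b,a,c). -/
def Gam (I : Set ℝ) : St → Set (PM St)
  | St.a => convexHullPM (gen St.a St.b St.c I)
  | St.b => convexHullPM (gen St.b St.a St.c I)
  | St.c => {dirac St.c}

/-- The payoff: 0 on the diagonal and 1 off the diagonal. -/
def pay : St × St → ℝ := fun z => if z.1 = z.2 then 0 else 1

/-- The candidate limit value with parameter t: rows a, b equal t on columns a', b',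
equal 1 on column c'; row c identically 0. -/
def limitVal (t : ℝ) : St × St → ℝ := fun z =>
  match z with
  | (St.c, _) => 0
  | (_, St.c) => 1
  | _ => t

end GG

namespace GG

open St
variable {S : Type*} [MeasurableSpace S]

/-! ### Basic toolkit for probability measures on `St` -/

def ms (p : PM St) (x : St) : ℝ := (p {x} : NNReal)

lemma ms_nonneg (p : PM St) (x : St) : 0 ≤ ms p x := (p {x}).coe_nonneg

lemma ms_eq_toReal (p : PM St) (x : St) : ms p x = ((p : Measure St) {x}).toReal := rfl

lemma sum_St (g : St → ℝ) : ∑ x, g x = g a + g b + g c := by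
  rw [show (Finset.univ : Finset St) = {St.a, St.b, St.c} from rfl]
  simp [Finset.sum_insert]
  ring

def EV (f : St → ℝ) (p : PM St) : ℝ := f a * ms p a + f b * ms p b + f c * ms p c

lemma integral_eq (f : St → ℝ) (p : PM St) :
    ∫ x, f x ∂(p : Measure St) = EV f p := by
  rw [integral_fintype .of_finite]
  rw [sum_St (fun x => (p : Measure St).real {x} • f x)]
  simp [EV, ms_eq_toReal, mul_comm, Measure.real]

lemma ms_sum (p : PM St) : ms p a + ms p b + ms p c = 1 := by
  have h := integral_eq (fun _ => (1:ℝ)) p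
  simp [EV] at h
  linarith

lemma ms_le_one (p : PM St) (x : St) : ms p x ≤ 1 := by
  have := ms_sum p
  have na := ms_nonneg p a; have nb := ms_nonneg p b; have nc := ms_nonneg p c
  cases x <;> linarith

lemma PM.ext_ms {p q : PM St} (h : ∀ x, ms p x = ms q x) : p = q := by
  apply Subtype.ext
  apply Measure.ext_iff_singleton.mpr
  intro x
  have hx := h x
  rw [ms_eq_toReal, ms_eq_toReal] at hx
  haveI := p.2; haveI := q.2
  exact (ENNReal.toReal_eq_toReal_iff' (measure_ne_top _ _) (measure_ne_top _ _)).mp hx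

lemma ms_dirac (x y : St) : ms (dirac x) y = if x = y then 1 else 0 := by
  rw [ms_eq_toReal]
  show (Measure.dirac x {y}).toReal = _
  rw [Measure.dirac_apply]
  by_cases h : x = y <;> simp [h, Set.indicator, mem_singleton_iff]

lemma ms_dirac_self (x : St) : ms (dirac x) x = 1 := by simp [ms_dirac]

lemma ms_dirac_ne {x y : St} (h : x ≠ y) : ms (dirac x) y = 0 := by simp [ms_dirac, h]

def mk3r (x y z : ℝ) (hx : 0 ≤ x) (hy : 0 ≤ y) (hz : 0 ≤ z) (h : x + y + z = 1) : PM St :=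
  ⟨ENNReal.ofReal x • Measure.dirac a + (ENNReal.ofReal y • Measure.dirac b
      + ENNReal.ofReal z • Measure.dirac c), by
    constructor
    simp only [Measure.add_apply, Measure.smul_apply, smul_eq_mul, measure_univ, mul_one]
    rw [← ENNReal.ofReal_add hy hz, ← ENNReal.ofReal_add hx (by positivity), ← add_assoc, h,
      ENNReal.ofReal_one]⟩

lemma ms_mk3r (x y z : ℝ) (hx : 0 ≤ x) (hy : 0 ≤ y) (hz : 0 ≤ z) (h : x + y + z = 1) :
    ms (mk3r x y z hx hy hz h) a = x ∧ ms (mk3r x y z hx hy hz h) b = y ∧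
      ms (mk3r x y z hx hy hz h) c = z := by
  have hco : (mk3r x y z hx hy hz h : Measure St) = ENNReal.ofReal x • Measure.dirac a
      + (ENNReal.ofReal y • Measure.dirac b + ENNReal.ofReal z • Measure.dirac c) := rfl
  refine ⟨?_, ?_, ?_⟩ <;>
  · rw [ms_eq_toReal, hco]
    simp [Measure.dirac_apply, Set.indicator, mem_singleton_iff, ENNReal.toReal_ofReal, hx, hy, hz,
      ENNReal.toReal_add, ENNReal.ofReal_ne_top]

/-- generic mixture -/
def mixPM (t : NNReal) (ht : t ≤ 1) (p q : PM S) : PM S :=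
  ⟨(t : ENNReal) • (p : Measure S) + ((1 : ENNReal) - (t : ENNReal)) • (q : Measure S), by
    haveI := p.2; haveI := q.2
    constructor
    simp only [Measure.add_apply, Measure.smul_apply, smul_eq_mul, measure_univ, mul_one]
    exact add_tsub_cancel_of_le (by exact_mod_cast ht)⟩

lemma isMix_mixPM (t : NNReal) (ht : t ≤ 1) (p q : PM S) :
    IsMix t p q (mixPM t ht p q) := rfl

lemma msMix {t : NNReal} (ht : t ≤ 1) {p q r : PM St} (hm : IsMix t p q r) (x : St) :
    ms r x = t * ms p x + (1 - (t:ℝ)) * ms q x := by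
  haveI := p.2; haveI := q.2
  have h1 : (r : Measure St) {x} = (t : ENNReal) * (p : Measure St) {x}
      + ((1 : ENNReal) - t) * (q : Measure St) {x} := by
    rw [hm]; simp [Measure.add_apply]
  rw [ms_eq_toReal, ms_eq_toReal, ms_eq_toReal, h1]
  rw [ENNReal.toReal_add (by finiteness) (by finiteness), ENNReal.toReal_mul, ENNReal.toReal_mul,
    ENNReal.toReal_sub_of_le (by exact_mod_cast ht) (by finiteness)]
  simp

lemma subset_hull (A : Set (PM S)) : A ⊆ convexHullPM A :=
  fun p hp => Set.mem_sInter.mpr (fun _ hT => hT.1 hp)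

lemma hull_min {A T : Set (PM S)} (h1 : A ⊆ T)
    (h2 : PMConvex T) : convexHullPM A ⊆ T := fun _ hp => hp T ⟨h1, h2⟩

lemma subset_hull2 (A : Set (PM S × PM S)) : A ⊆ convexHull2 A :=
  fun p hp => Set.mem_sInter.mpr (fun _ hT => hT.1 hp)

lemma hull2_min {A T : Set (PM S × PM S)} (h1 : A ⊆ T)
    (h2 : PMConvex2 T) : convexHull2 A ⊆ T := fun _ hp => hp T ⟨h1, h2⟩

lemma pmconvex_le (f : St → ℝ) (C : ℝ) : PMConvex {p : PM St | EV f p ≤ C} := by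
  intro p hp q hq t ht r hr
  have h0 : (0:ℝ) ≤ t := t.coe_nonneg
  have h1 : (t:ℝ) ≤ 1 := by exact_mod_cast ht
  have : EV f r = t * EV f p + (1 - (t:ℝ)) * EV f q := by
    simp only [EV, fun x => msMix ht hr x]; ring
  rw [Set.mem_setOf_eq, this]
  calc (t:ℝ) * EV f p + (1 - (t:ℝ)) * EV f q ≤ t * C + (1-(t:ℝ)) * C := by
        apply add_le_add (mul_le_mul_of_nonneg_left hp h0)
          (mul_le_mul_of_nonneg_left hq (by linarith))
    _ = C := by ring

lemma pmconvex_ge (f : St → ℝ) (C : ℝ) : PMConvex {p : PM St | C ≤ EV f p} := by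
  intro p hp q hq t ht r hr
  have h0 : (0:ℝ) ≤ t := t.coe_nonneg
  have h1 : (t:ℝ) ≤ 1 := by exact_mod_cast ht
  have : EV f r = t * EV f p + (1 - (t:ℝ)) * EV f q := by
    simp only [EV, fun x => msMix ht hr x]; ring
  rw [Set.mem_setOf_eq, this]
  calc C = (t:ℝ) * C + (1-(t:ℝ)) * C := by ring
    _ ≤ _ := add_le_add (mul_le_mul_of_nonneg_left hp h0)
        (mul_le_mul_of_nonneg_left hq (by linarith))

lemma continuous_EV (f : St → ℝ) : Continuous (EV f) := by
  have : EV f = fun p : PM St => ∫ x, (BoundedContinuousFunction.mkOfCompact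
      ⟨f, continuous_of_discreteTopology⟩) x ∂(p : Measure St) := by
    funext p; rw [integral_eq]; rfl
  rw [this]
  exact MeasureTheory.ProbabilityMeasure.continuous_integral_boundedContinuousFunction _

lemma continuous_ms (x : St) : Continuous (fun p : PM St => ms p x) := by
  have : (fun p : PM St => ms p x) = EV (fun y => if y = x then 1 else 0) := by
    funext p
    have hs := ms_nonneg p
    cases x <;> simp [EV]
  rw [this]; exact continuous_EV _

lemma tendsto_PM {p : ℕ → PM St} {q : PM St}
    (h : ∀ x, Tendsto (fun n => ms (p n) x) atTop (𝓝 (ms q x))) :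
    Tendsto p atTop (𝓝 q) := by
  rw [MeasureTheory.ProbabilityMeasure.tendsto_iff_forall_integral_tendsto]
  intro f
  have hrw : ∀ r : PM St, ∫ x, f x ∂(r : Measure St) = EV f r := fun r => integral_eq f r
  simp only [hrw, EV]
  exact (((h a).const_mul _).add ((h b).const_mul _)).add ((h c).const_mul _)

lemma iXY_dirac_right (v : St × St → ℝ) (p : PM St) (y : St) :
    iXY v p (dirac y) = EV (fun x => v (x, y)) p := by
  unfold iXY
  have hd : ∀ x : St, ∫ y', v (x, y') ∂((dirac y : PM St) : Measure St) = v (x, y) := by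
    intro x
    show ∫ y', v (x, y') ∂(Measure.dirac y) = v (x, y)
    exact integral_dirac _ _
  simp only [hd]
  exact integral_eq _ p

lemma iXY_dirac_left (v : St × St → ℝ) (x : St) (q : PM St) :
    iXY v (dirac x) q = EV (fun y => v (x, y)) q := by
  unfold iXY
  rw [show ((dirac x : PM St) : Measure St) = Measure.dirac x from rfl, integral_dirac]
  exact integral_eq _ q

lemma iXY_dirac_dirac (v : St × St → ℝ) (x y : St) :
    iXY v (dirac x) (dirac y) = v (x, y) := by
  rw [iXY_dirac_left]
  cases y <;> simp [EV, ms_dirac]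

/-! ### gen / Gam lemmas -/

lemma ms_def (p : PM St) (x : St) : ((p {x} : NNReal) : ℝ) = ms p x := rfl

lemma nn_sum (p : PM St) : p {a} + p {b} + p {c} = 1 := by
  have h := ms_sum p
  rw [← ms_def, ← ms_def, ← ms_def] at h
  exact_mod_cast h

def gA (τ : ℝ) (h : τ ∈ Icc (0:ℝ) (1/2)) : PM St :=
  mk3r (1 - τ - τ^2) τ (τ^2) (by nlinarith [h.1, h.2]) h.1 (by positivity) (by ring)

def gB (τ : ℝ) (h : τ ∈ Icc (0:ℝ) (1/2)) : PM St :=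
  mk3r τ (1 - τ - τ^2) (τ^2) h.1 (by nlinarith [h.1, h.2]) (by positivity) (by ring)

lemma ms_gA (τ : ℝ) (h : τ ∈ Icc (0:ℝ) (1/2)) :
    ms (gA τ h) a = 1 - τ - τ^2 ∧ ms (gA τ h) b = τ ∧ ms (gA τ h) c = τ^2 := ms_mk3r _ _ _ _ _ _ _

lemma ms_gB (τ : ℝ) (h : τ ∈ Icc (0:ℝ) (1/2)) :
    ms (gB τ h) a = τ ∧ ms (gB τ h) b = 1 - τ - τ^2 ∧ ms (gB τ h) c = τ^2 := ms_mk3r _ _ _ _ _ _ _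

lemma gA_mem_gen {K : Set ℝ} {τ : ℝ} (hτ : τ ∈ K) (h : τ ∈ Icc (0:ℝ) (1/2)) :
    gA τ h ∈ gen a b c K := by
  obtain ⟨h1, h2, h3⟩ := ms_gA τ h
  exact ⟨τ, hτ, by rw [ms_def, h1], by rw [ms_def, h2], by rw [ms_def, h3]⟩

lemma gB_mem_gen {K : Set ℝ} {τ : ℝ} (hτ : τ ∈ K) (h : τ ∈ Icc (0:ℝ) (1/2)) :
    gB τ h ∈ gen b a c K := by
  obtain ⟨h1, h2, h3⟩ := ms_gB τ h
  exact ⟨τ, hτ, by rw [ms_def, h2], by rw [ms_def, h1], by rw [ms_def, h3]⟩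

lemma Gam_a (K : Set ℝ) : Gam K a = convexHullPM (gen a b c K) := rfl
lemma Gam_b (K : Set ℝ) : Gam K b = convexHullPM (gen b a c K) := rfl
lemma Gam_c (K : Set ℝ) : Gam K c = {dirac c} := rfl

lemma gA_mem_Gam {K : Set ℝ} {τ : ℝ} (hτ : τ ∈ K) (h : τ ∈ Icc (0:ℝ) (1/2)) :
    gA τ h ∈ Gam K a := subset_hull _ (gA_mem_gen hτ h)

lemma gB_mem_Gam {K : Set ℝ} {τ : ℝ} (hτ : τ ∈ K) (h : τ ∈ Icc (0:ℝ) (1/2)) :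
    gB τ h ∈ Gam K b := subset_hull _ (gB_mem_gen hτ h)

lemma dirac_mem_Gam {K : Set ℝ} (hK0 : (0:ℝ) ∈ K) (x : St) : dirac x ∈ Gam K x := by
  cases x
  · exact subset_hull _ ⟨0, hK0, by rw [ms_def]; simp [ms_dirac], by rw [ms_def]; simp [ms_dirac],
      by rw [ms_def]; simp [ms_dirac]⟩
  · exact subset_hull _ ⟨0, hK0, by rw [ms_def]; simp [ms_dirac], by rw [ms_def]; simp [ms_dirac],
      by rw [ms_def]; simp [ms_dirac]⟩
  · exact rfl

lemma hull_le {x y z : St} (K : Set ℝ) (f : St → ℝ) (C : ℝ)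
    (hEV : ∀ p : PM St, EV f p = f x * ms p x + f y * ms p y + f z * ms p z)
    (h : ∀ τ ∈ K, f x * (1 - τ - τ^2) + f y * τ + f z * τ^2 ≤ C) :
    ∀ p ∈ convexHullPM (gen x y z K), EV f p ≤ C := by
  intro p hp
  refine hull_min (T := {p : PM St | EV f p ≤ C}) ?_ (pmconvex_le f C) hp
  rintro q ⟨τ, hτ, h1, h2, h3⟩
  rw [ms_def] at h1 h2 h3
  show EV f q ≤ C
  rw [hEV q, h1, h2, h3]
  exact h τ hτ

lemma hull_ge {x y z : St} (K : Set ℝ) (f : St → ℝ) (C : ℝ)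
    (hEV : ∀ p : PM St, EV f p = f x * ms p x + f y * ms p y + f z * ms p z)
    (h : ∀ τ ∈ K, C ≤ f x * (1 - τ - τ^2) + f y * τ + f z * τ^2) :
    ∀ p ∈ convexHullPM (gen x y z K), C ≤ EV f p := by
  intro p hp
  refine hull_min (T := {p : PM St | C ≤ EV f p}) ?_ (pmconvex_ge f C) hp
  rintro q ⟨τ, hτ, h1, h2, h3⟩
  rw [ms_def] at h1 h2 h3
  show C ≤ EV f q
  rw [hEV q, h1, h2, h3]
  exact h τ hτ

/-! ### combinations and the graph of the linear extension -/

lemma coe_repr (p : PM St) : (p : Measure St)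
    = ((p {a} : NNReal) : ENNReal) • Measure.dirac a
      + (((p {b} : NNReal) : ENNReal) • Measure.dirac b
        + ((p {c} : NNReal) : ENNReal) • Measure.dirac c) := by
  apply Measure.ext_iff_singleton.mpr
  intro x
  rw [← MeasureTheory.ProbabilityMeasure.ennreal_coeFn_eq_coeFn_toMeasure]
  cases x <;> simp [Measure.dirac_apply, Set.indicator, mem_singleton_iff]

def comb (p ka kb kc : PM St) : PM St :=
  ⟨((p {a} : NNReal) : ENNReal) • (ka : Measure St)
    + (((p {b} : NNReal) : ENNReal) • (kb : Measure St)
      + ((p {c} : NNReal) : ENNReal) • (kc : Measure St)), by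
    haveI := ka.2; haveI := kb.2; haveI := kc.2
    constructor
    simp only [Measure.add_apply, Measure.smul_apply, smul_eq_mul, measure_univ, mul_one]
    rw [← ENNReal.coe_add, ← ENNReal.coe_add, ← add_assoc (p {a}), nn_sum p, ENNReal.coe_one]⟩

lemma ms_comb (p ka kb kc : PM St) (x : St) :
    ms (comb p ka kb kc) x = ms p a * ms ka x + ms p b * ms kb x + ms p c * ms kc x := by
  haveI := ka.2; haveI := kb.2; haveI := kc.2
  have hco : (comb p ka kb kc : Measure St) {x}
      = ((p {a} : NNReal) : ENNReal) * (ka : Measure St) {x}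
        + (((p {b} : NNReal) : ENNReal) * (kb : Measure St) {x}
          + ((p {c} : NNReal) : ENNReal) * (kc : Measure St) {x}) := by
    show (_ + (_ + _) : Measure St) {x} = _
    simp [Measure.add_apply]
  rw [ms_eq_toReal, hco, ENNReal.toReal_add (by finiteness) (by finiteness),
    ENNReal.toReal_add (by finiteness) (by finiteness), ENNReal.toReal_mul, ENNReal.toReal_mul,
    ENNReal.toReal_mul]
  simp only [ENNReal.coe_toReal, ms_def, ms_eq_toReal]
  ring

lemma mem_of_convex2 {T : Set (PM S × PM S)} (hT : PMConvex2 T) {z1 z2 : PM S × PM S}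
    (h1 : z1 ∈ T) (h2 : z2 ∈ T) (t : NNReal) (ht : t ≤ 1) :
    (mixPM t ht z1.1 z2.1, mixPM t ht z1.2 z2.2) ∈ T :=
  hT z1 h1 z2 h2 t ht _ rfl rfl

lemma comb_mem_hull2 (G : St → Set (PM St)) (k : St → PM St) (hk : ∀ x, k x ∈ G x) (p : PM St) :
    (p, comb p (k a) (k b) (k c)) ∈ convexHull2 {z : PM St × PM St | ∃ x, z.1 = dirac x ∧ z.2 ∈ G x} := by
  intro T hT
  obtain ⟨hsub, hcvx⟩ := hT
  have za : ((dirac a, k a) : PM St × PM St) ∈ T := hsub ⟨a, rfl, hk a⟩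
  have zb : ((dirac b, k b) : PM St × PM St) ∈ T := hsub ⟨b, rfl, hk b⟩
  have zc : ((dirac c, k c) : PM St × PM St) ∈ T := hsub ⟨c, rfl, hk c⟩
  have hsum : p {a} + p {b} + p {c} = 1 := nn_sum p
  by_cases hw : p {a} + p {b} = 0
  · have hwa : p {a} = 0 := by
      have := (add_eq_zero.mp hw).1; exact this
    have hwb : p {b} = 0 := (add_eq_zero.mp hw).2
    have hwc : p {c} = 1 := by rw [hwa, hwb] at hsum; simpa using hsum
    have hp : p = dirac c := by
      apply PM.ext_ms
      intro x
      have h1 : ms p a = 0 := by rw [← ms_def, hwa]; rfl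
      have h2 : ms p b = 0 := by rw [← ms_def, hwb]; rfl
      have h3 : ms p c = 1 := by rw [← ms_def, hwc]; rfl
      cases x <;> simp [ms_dirac, h1, h2, h3]
    have hcomb : comb p (k a) (k b) (k c) = k c := by
      apply Subtype.ext
      show (_ + (_ + _) : Measure St) = _
      rw [hwa, hwb, hwc]
      simp
    have heq : (p, comb p (k a) (k b) (k c)) = ((dirac c, k c) : PM St × PM St) := by
      rw [hcomb, hp]
    rw [heq]
    exact zc
  · set w : NNReal := p {a} + p {b} with hwdef
    have hwpos : 0 < w := pos_iff_ne_zero.mpr hw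
    have hw1 : w ≤ 1 := by rw [← hsum]; exact le_self_add
    set t1 : NNReal := p {a} / w with ht1def
    have ht1 : t1 ≤ 1 := (div_le_one hwpos).mpr le_self_add
    have zab := mem_of_convex2 hcvx za zb t1 ht1
    have s1 : (w : ENNReal) * t1 = (p {a} : NNReal) := by
      rw [← ENNReal.coe_mul]
      congr 1
      rw [mul_comm, div_mul_cancel₀ _ hw]
    have s2 : (w : ENNReal) * (1 - t1) = (p {b} : NNReal) := by
      have h1t : (1:NNReal) - t1 = p {b} / w := by
        have : p {b} / w + t1 = 1 := by
          rw [ht1def, ← add_div, add_comm (p {b}) (p {a}), ← hwdef, div_self hw]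
        rw [← this]; simp
      rw [show ((1:ENNReal) - t1) = ((1 - t1 : NNReal) : ENNReal) from (ENNReal.coe_sub).symm,
        ← ENNReal.coe_mul, h1t]
      congr 1
      rw [mul_comm, div_mul_cancel₀ _ hw]
    have s3 : (1:ENNReal) - w = (p {c} : NNReal) := by
      have : (1:NNReal) - w = p {c} := by
        have : w + p {c} = 1 := hsum
        rw [← this]; simp
      rw [show ((1:ENNReal) - w) = ((1 - w : NNReal) : ENNReal) from (ENNReal.coe_sub).symm, this]
    have key : ∀ qa qb qc : PM St, (comb p qa qb qc : Measure St)
        = (w : ENNReal) • (mixPM t1 ht1 qa qb : Measure St)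
          + ((1:ENNReal) - w) • (qc : Measure St) := by
      intro qa qb qc
      show (_ • _ + (_ • _ + _ • _) : Measure St) = _
      rw [show (mixPM t1 ht1 qa qb : Measure St)
        = (t1 : ENNReal) • (qa : Measure St) + ((1:ENNReal) - t1) • (qb : Measure St) from rfl]
      rw [smul_add, smul_smul, smul_smul, s1, s2, s3, ← add_assoc]
  -- orientation
    have hpm : IsMix w (mixPM t1 ht1 (dirac a) (dirac b)) (dirac c) p := by
      show (p : Measure St) = _
      rw [coe_repr p]
      exact key (dirac a) (dirac b) (dirac c)
    have hcm : IsMix w (mixPM t1 ht1 (k a) (k b)) (k c) (comb p (k a) (k b) (k c)) :=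
      key (k a) (k b) (k c)
    exact hcvx _ zab _ zc w hw1 (p, comb p (k a) (k b) (k c)) hpm hcm

lemma comb_mem_tStep (G : St → Set (PM St)) (k : St → PM St) (hk : ∀ x, k x ∈ G x) (p : PM St) :
    comb p (k a) (k b) (k c) ∈ tStep G p :=
  subset_closure (comb_mem_hull2 G k hk p)

lemma iterate_mem_tIter (G : St → Set (PM St)) (f : PM St → PM St)
    (hf : ∀ p, f p ∈ tStep G p) : ∀ (n : ℕ) (p : PM St), f^[n] p ∈ tIter G n p := by
  intro n
  induction n with
  | zero => intro p; rfl
  | succ n ih =>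
    intro p
    exact ⟨f p, hf p, by rw [Function.iterate_succ_apply]; exact ih (f p)⟩

lemma tIter_subset_reach (G : St → Set (PM St)) (x : St) (n : ℕ) :
    tIter G n (dirac x) ⊆ reach G x :=
  fun _ hq => subset_closure (Set.mem_iUnion.mpr ⟨n, hq⟩)

lemma dirac_mem_reach (G : St → Set (PM St)) (x : St) : dirac x ∈ reach G x :=
  tIter_subset_reach G x 0 rfl
/-! ### c is absorbing -/

lemma tGraph_mono_c (K : Set ℝ) :
    tGraph (Gam K) ⊆ {z : PM St × PM St | ms z.1 c ≤ ms z.2 c} := by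
  apply closure_minimal
  · apply hull2_min
    · rintro ⟨p1, p2⟩ ⟨x, hx, hp⟩
      simp only [Set.mem_setOf_eq] at *
      subst hx
      cases x with
      | a => rw [ms_dirac_ne (by simp)]; exact ms_nonneg p2 c
      | b => rw [ms_dirac_ne (by simp)]; exact ms_nonneg p2 c
      | c =>
        have : p2 = dirac c := hp
        rw [this]
    · rintro z1 h1 z2 h2 t ht r hm1 hm2
      simp only [Set.mem_setOf_eq] at *
      rw [msMix ht hm1, msMix ht hm2]
      have h0 : (0:ℝ) ≤ t := t.coe_nonneg
      have h1' : (t:ℝ) ≤ 1 := by exact_mod_cast ht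
      have := mul_le_mul_of_nonneg_left h1 h0
      have := mul_le_mul_of_nonneg_left h2 (by linarith : (0:ℝ) ≤ 1 - (t:ℝ))
      linarith
  · exact isClosed_le ((continuous_ms c).comp continuous_fst) ((continuous_ms c).comp continuous_snd)

lemma tIter_mono_c (K : Set ℝ) : ∀ (n : ℕ) (p q : PM St),
    q ∈ tIter (Gam K) n p → ms p c ≤ ms q c := by
  intro n
  induction n with
  | zero => intro p q hq; rw [show q = p from hq]
  | succ n ih =>
    rintro p q ⟨q', hq', hq⟩
    exact le_trans (tGraph_mono_c K hq') (ih q' q hq)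

lemma reach_c_absorb (K : Set ℝ) : ∀ q ∈ reach (Gam K) c, ms q c = 1 := by
  intro q hq
  have h1 : q ∈ {r : PM St | 1 ≤ ms r c} := by
    have hcl : IsClosed {r : PM St | 1 ≤ ms r c} := isClosed_le continuous_const (continuous_ms c)
    refine closure_minimal ?_ hcl hq
    intro r hr
    obtain ⟨n, hn⟩ := Set.mem_iUnion.mp hr
    have := tIter_mono_c K n (dirac c) r hn
    rwa [ms_dirac_self] at this
  exact le_antisymm (ms_le_one q c) h1

lemma reach_c_ms (K : Set ℝ) (q : PM St) (hq : q ∈ reach (Gam K) c) :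
    ms q a = 0 ∧ ms q b = 0 ∧ ms q c = 1 := by
  have h3 := reach_c_absorb K q hq
  have hsum := ms_sum q
  have na := ms_nonneg q a; have nb := ms_nonneg q b
  exact ⟨by linarith, by linarith, h3⟩

/-! ### step maps and reachability -/

def gX (x : St) (τ : ℝ) (h : τ ∈ Icc (0:ℝ) (1/2)) : PM St := if x = a then gA τ h else gB τ h

variable {KK : Set ℝ}

lemma ms_gX {x y : St} (H : (x = a ∧ y = b) ∨ (x = b ∧ y = a)) (τ : ℝ) (h : τ ∈ Icc (0:ℝ) (1/2)) :
    ms (gX x τ h) x = 1 - τ - τ^2 ∧ ms (gX x τ h) y = τ ∧ ms (gX x τ h) c = τ^2 := by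
  rcases H with ⟨hx, hy⟩ | ⟨hx, hy⟩ <;> subst hx <;> subst hy
  · simpa [gX] using ms_gA τ h
  · have := ms_gB τ h
    simp only [gX, if_neg (by simp : (b:St) ≠ a)]
    exact ⟨this.2.1, this.1, this.2.2⟩

lemma gX_mem_Gam {x y : St} (H : (x = a ∧ y = b) ∨ (x = b ∧ y = a)) {K : Set ℝ} (τ : ℝ) (h : τ ∈ Icc (0:ℝ) (1/2)) (hτ : τ ∈ K) : gX x τ h ∈ Gam K x := by
  rcases H with ⟨hx, _⟩ | ⟨hx, _⟩ <;> subst hx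
  · simpa [gX] using gA_mem_Gam hτ h
  · simp only [gX, if_neg (by simp : (b:St) ≠ a)]
    exact gB_mem_Gam hτ h

def kstep (x : St) (τ : ℝ) (h : τ ∈ Icc (0:ℝ) (1/2)) : St → PM St :=
  fun z => if z = x then gX x τ h else dirac z

lemma kstep_mem {x y : St} (H : (x = a ∧ y = b) ∨ (x = b ∧ y = a)) {K : Set ℝ} (τ : ℝ) (h : τ ∈ Icc (0:ℝ) (1/2)) (hτ : τ ∈ K) (hK0 : (0:ℝ) ∈ K) :
    ∀ z, kstep x τ h z ∈ Gam K z := by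
  intro z
  by_cases hz : z = x
  · subst hz; simp only [kstep, if_pos rfl]; exact gX_mem_Gam H τ h hτ
  · simp only [kstep, if_neg hz]; exact dirac_mem_Gam hK0 z

def Fst (x : St) (τ : ℝ) (h : τ ∈ Icc (0:ℝ) (1/2)) : PM St → PM St :=
  fun p => comb p (kstep x τ h a) (kstep x τ h b) (kstep x τ h c)

lemma Fst_mem_tStep {x y : St} (H : (x = a ∧ y = b) ∨ (x = b ∧ y = a)) {K : Set ℝ} (τ : ℝ) (h : τ ∈ Icc (0:ℝ) (1/2)) (hτ : τ ∈ K) (hK0 : (0:ℝ) ∈ K) :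
    ∀ p, Fst x τ h p ∈ tStep (Gam K) p :=
  fun p => comb_mem_tStep (Gam K) _ (kstep_mem H τ h hτ hK0) p

lemma ms_Fst {x y : St} (H : (x = a ∧ y = b) ∨ (x = b ∧ y = a)) (τ : ℝ) (h : τ ∈ Icc (0:ℝ) (1/2)) (p : PM St) :
    ms (Fst x τ h p) x = ms p x * (1 - τ - τ^2)
    ∧ ms (Fst x τ h p) y = ms p x * τ + ms p y
    ∧ ms (Fst x τ h p) c = ms p x * τ^2 + ms p c := by
  rcases H with ⟨hx, hy⟩ | ⟨hx, hy⟩ <;> subst hx <;> subst hy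
  · have hka : kstep a τ h a = gA τ h := by simp [kstep, gX]
    have hkb : kstep a τ h b = dirac b := by simp [kstep]
    have hkc : kstep a τ h c = dirac c := by simp [kstep]
    obtain ⟨g1, g2, g3⟩ := ms_gA τ h
    refine ⟨?_, ?_, ?_⟩ <;>
      simp [Fst, ms_comb, hka, hkb, hkc, g1, g2, g3, ms_dirac] <;> try ring
  · have hka : kstep b τ h a = dirac a := by simp [kstep]
    have hkb : kstep b τ h b = gX b τ h := by simp [kstep]
    have hkb' : gX b τ h = gB τ h := by simp [gX]
    have hkc : kstep b τ h c = dirac c := by simp [kstep]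
    obtain ⟨g1, g2, g3⟩ := ms_gB τ h
    refine ⟨?_, ?_, ?_⟩ <;>
      simp [Fst, ms_comb, hka, hkb, hkb', hkc, g1, g2, g3, ms_dirac] <;> try ring

lemma Fst_iter_ms {x y : St} (H : (x = a ∧ y = b) ∨ (x = b ∧ y = a)) (τ : ℝ) (h : τ ∈ Icc (0:ℝ) (1/2)) (n : ℕ) :
    ms ((Fst x τ h)^[n] (dirac x)) x = (1 - τ - τ^2)^n
    ∧ ms ((Fst x τ h)^[n] (dirac x)) y = (1 - (1 - τ - τ^2)^n) / (1 + τ)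
    ∧ ms ((Fst x τ h)^[n] (dirac x)) c = τ * (1 - (1 - τ - τ^2)^n) / (1 + τ) := by
  have hxy : x ≠ y := by rcases H with ⟨hx, hy⟩ | ⟨hx, hy⟩ <;> subst hx <;> subst hy <;> simp
  have hxc : x ≠ c := by rcases H with ⟨hx, _⟩ | ⟨hx, _⟩ <;> subst hx <;> simp
  have h1τ : (1:ℝ) + τ ≠ 0 := by have := h.1; positivity
  induction n with
  | zero =>
    simp only [Function.iterate_zero_apply, pow_zero]
    rw [ms_dirac_self, ms_dirac_ne hxy, ms_dirac_ne hxc]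
    norm_num
  | succ n ih =>
    obtain ⟨i1, i2, i3⟩ := ih
    rw [Function.iterate_succ_apply']
    obtain ⟨f1, f2, f3⟩ := ms_Fst H τ h ((Fst x τ h)^[n] (dirac x))
    rw [f1, f2, f3, i1, i2, i3]
    refine ⟨by ring, ?_, ?_⟩ <;>
    · rw [pow_succ]
      field_simp
      ring

lemma reach_xy {x y : St} (H : (x = a ∧ y = b) ∨ (x = b ∧ y = a)) (K : Set ℝ)
    (hK0 : (0:ℝ) ∈ K) (hKsub : K ⊆ Icc 0 (1/2)) (hKacc : (0:ℝ) ∈ closure (K \ {0}))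
    (s : ℝ) (hs : s ∈ Icc (0:ℝ) 1) (q : PM St)
    (hqx : ms q x = 1 - s) (hqy : ms q y = s) (hqc : ms q c = 0) :
    q ∈ reach (Gam K) x := by
  obtain ⟨τ, hτmem, hτlim⟩ := mem_closure_iff_seq_limit.mp hKacc
  have hτK : ∀ k, τ k ∈ K := fun k => (hτmem k).1
  have hτne : ∀ k, τ k ≠ 0 := fun k => fun hh => (hτmem k).2 (by simp [hh])
  have hτIcc : ∀ k, τ k ∈ Icc (0:ℝ) (1/2) := fun k => hKsub (hτK k)
  have hτpos : ∀ k, 0 < τ k := fun k => lt_of_le_of_ne (hτIcc k).1 (Ne.symm (hτne k))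
  set r : ℕ → ℝ := fun k => 1 - τ k - (τ k)^2 with hrdef
  have hr_pos : ∀ k, 0 < r k := by
    intro k; have h1 := (hτIcc k).1; have h2 := (hτIcc k).2
    simp only [hrdef]; nlinarith
  have hr_lt1 : ∀ k, r k < 1 := by
    intro k; have h1 := hτpos k; simp only [hrdef]; nlinarith
  have hrlim : Tendsto r atTop (𝓝 1) := by
    have : Tendsto (fun k => 1 - τ k - (τ k)^2) atTop (𝓝 (1 - 0 - 0^2)) :=
      (tendsto_const_nhds.sub hτlim).sub (hτlim.pow 2)
    simpa using this
  set m : ℕ → ℝ := fun k => max (1 - s) (Real.exp (-(k + 1 : ℝ))) with hmdef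
  have hm_pos : ∀ k, 0 < m k := fun k => lt_of_lt_of_le (Real.exp_pos _) (le_max_right _ _)
  have hm_le1 : ∀ k, m k ≤ 1 := by
    intro k
    apply max_le (by linarith [hs.1])
    rw [Real.exp_le_one_iff]
    push_cast; linarith
  have hmlim : Tendsto m atTop (𝓝 (1 - s)) := by
    have h1 : Tendsto (fun k : ℕ => Real.exp (-(k + 1 : ℝ))) atTop (𝓝 0) := by
      apply Real.tendsto_exp_neg_atTop_nhds_zero.comp
      exact tendsto_atTop_add_const_right atTop 1 tendsto_natCast_atTop_atTop
    have := Tendsto.max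
      (tendsto_const_nhds : Tendsto (fun _ : ℕ => (1 - s : ℝ)) atTop (𝓝 (1 - s))) h1
    rwa [max_eq_left (by linarith [hs.2] : (0:ℝ) ≤ 1 - s)] at this
  set n : ℕ → ℕ := fun k => ⌈Real.log (m k) / Real.log (r k)⌉₊ with hndef
  have key : ∀ k, m k * r k ≤ (r k)^(n k) ∧ (r k)^(n k) ≤ m k := by
    intro k
    have hlogr : Real.log (r k) < 0 := Real.log_neg (hr_pos k) (hr_lt1 k)
    have hlogm : Real.log (m k) ≤ 0 := Real.log_nonpos (le_of_lt (hm_pos k)) (hm_le1 k)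
    have hL : 0 ≤ Real.log (m k) / Real.log (r k) :=
      div_nonneg_iff.mpr (Or.inr ⟨hlogm, hlogr.le⟩)
    have hLl : (Real.log (m k) / Real.log (r k)) * Real.log (r k) = Real.log (m k) :=
      div_mul_cancel₀ _ (ne_of_lt hlogr)
    have hrn : (r k)^(n k) = Real.exp ((n k : ℝ) * Real.log (r k)) := by
      rw [← Real.log_pow, Real.exp_log (pow_pos (hr_pos k) _)]
    constructor
    · have hceil : (n k : ℝ) < Real.log (m k) / Real.log (r k) + 1 := Nat.ceil_lt_add_one hL
      have hmul : Real.log (m k) + Real.log (r k) < (n k : ℝ) * Real.log (r k) := by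
        nlinarith [mul_lt_mul_of_neg_right hceil hlogr]
      calc m k * r k = Real.exp (Real.log (m k) + Real.log (r k)) := by
            rw [Real.exp_add, Real.exp_log (hm_pos k), Real.exp_log (hr_pos k)]
        _ ≤ Real.exp ((n k : ℝ) * Real.log (r k)) := Real.exp_le_exp.mpr hmul.le
        _ = (r k)^(n k) := hrn.symm
    · have hceil2 : Real.log (m k) / Real.log (r k) ≤ (n k : ℝ) := Nat.le_ceil _
      have hmul : (n k : ℝ) * Real.log (r k) ≤ Real.log (m k) := by
        nlinarith [mul_le_mul_of_nonpos_right hceil2 hlogr.le]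
      calc (r k)^(n k) = Real.exp ((n k : ℝ) * Real.log (r k)) := hrn
        _ ≤ Real.exp (Real.log (m k)) := Real.exp_le_exp.mpr hmul
        _ = m k := Real.exp_log (hm_pos k)
  have hrn_lim : Tendsto (fun k => (r k)^(n k)) atTop (𝓝 (1 - s)) := by
    have hlower : Tendsto (fun k => m k * r k) atTop (𝓝 (1 - s)) := by
      have := hmlim.mul hrlim
      simpa using this
    exact tendsto_of_tendsto_of_tendsto_of_le_of_le hlower hmlim
      (fun k => (key k).1) (fun k => (key k).2)
  set pk : ℕ → PM St := fun k => (Fst x (τ k) (hτIcc k))^[n k] (dirac x) with hpkdef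
  have hpk_mem : ∀ k, pk k ∈ ⋃ i, tIter (Gam K) i (dirac x) := fun k =>
    Set.mem_iUnion.mpr ⟨n k, iterate_mem_tIter (Gam K) _
      (Fst_mem_tStep H (τ k) (hτIcc k) (hτK k) hK0) (n k) (dirac x)⟩
  have hconv : Tendsto pk atTop (𝓝 q) := by
    apply tendsto_PM
    have hms := fun k => Fst_iter_ms H (τ k) (hτIcc k) (n k)
    have tx : Tendsto (fun k => ms (pk k) x) atTop (𝓝 (ms q x)) := by
      rw [hqx]
      simp only [hpkdef, fun k => (hms k).1]
      exact hrn_lim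
    have ty : Tendsto (fun k => ms (pk k) y) atTop (𝓝 (ms q y)) := by
      rw [hqy]
      simp only [hpkdef, fun k => (hms k).2.1]
      have := Tendsto.div
        ((tendsto_const_nhds : Tendsto (fun _ : ℕ => (1:ℝ)) atTop (𝓝 1)).sub hrn_lim)
        ((tendsto_const_nhds : Tendsto (fun _ : ℕ => (1:ℝ)) atTop (𝓝 1)).add hτlim)
        (by norm_num : (1:ℝ) + 0 ≠ 0)
      simpa [Pi.div_def] using this
    have tc : Tendsto (fun k => ms (pk k) c) atTop (𝓝 (ms q c)) := by
      rw [hqc]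
      simp only [hpkdef, fun k => (hms k).2.2]
      have := Tendsto.div
        (hτlim.mul ((tendsto_const_nhds : Tendsto (fun _ : ℕ => (1:ℝ)) atTop (𝓝 1)).sub hrn_lim))
        ((tendsto_const_nhds : Tendsto (fun _ : ℕ => (1:ℝ)) atTop (𝓝 1)).add hτlim)
        (by norm_num : (1:ℝ) + 0 ≠ 0)
      simpa [Pi.div_def] using this
    intro z
    have hz : z = x ∨ z = y ∨ z = c := by
      rcases H with ⟨hx, hy⟩ | ⟨hx, hy⟩ <;> subst hx <;> subst hy <;> cases z <;> tauto
    rcases hz with rfl | rfl | rfl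
    · exact tx
    · exact ty
    · exact tc
  exact mem_closure_of_tendsto hconv (Filter.Eventually.of_forall hpk_mem)

lemma reach_diracC (K : Set ℝ) (hK0 : (0:ℝ) ∈ K) (hKsub : K ⊆ Icc 0 (1/2))
    (hKne : (K \ {0}).Nonempty) : ∀ x, dirac c ∈ reach (Gam K) x := by
  intro x
  obtain ⟨τ, hτK, hτ0⟩ := hKne
  have hτIcc : τ ∈ Icc (0:ℝ) (1/2) := hKsub hτK
  have hτpos : 0 < τ := lt_of_le_of_ne hτIcc.1 (Ne.symm (by simpa using hτ0))
  set k : St → PM St := fun z => if z = a then gA τ hτIcc else if z = b then gB τ hτIcc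
    else dirac z with hkdef
  have hkmem : ∀ z, k z ∈ Gam K z := by
    intro z
    cases z
    · simpa [hkdef] using gA_mem_Gam hτK hτIcc
    · simpa [hkdef] using gB_mem_Gam hτK hτIcc
    · simpa [hkdef] using dirac_mem_Gam hK0 c
  set f : PM St → PM St := fun p => comb p (k a) (k b) (k c) with hfdef
  have hstep : ∀ p, f p ∈ tStep (Gam K) p := fun p => comb_mem_tStep (Gam K) k hkmem p
  have hmsf : ∀ p : PM St, 1 - ms (f p) c = (1 - τ^2) * (1 - ms p c) := by
    intro p
    have hc : ms (f p) c = ms p a * τ^2 + ms p b * τ^2 + ms p c := by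
      simp only [hfdef, ms_comb, hkdef]
      have e1 : ms (gA τ hτIcc) c = τ^2 := (ms_gA τ hτIcc).2.2
      have e2 : ms (gB τ hτIcc) c = τ^2 := (ms_gB τ hτIcc).2.2
      simp [e1, e2, ms_dirac]
    rw [hc]
    have hsum := ms_sum p
    ring_nf
    linear_combination (-(τ^2)) * hsum
  have hiter : ∀ (nn : ℕ) (p0 : PM St), 1 - ms (f^[nn] p0) c = (1 - τ^2)^nn * (1 - ms p0 c) := by
    intro nn
    induction nn with
    | zero => intro p0; simp
    | succ nn ih =>
      intro p0
      rw [Function.iterate_succ_apply', hmsf, ih, pow_succ]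
      ring
  have hpow : Tendsto (fun nn : ℕ => (1 - τ^2)^nn) atTop (𝓝 0) := by
    apply tendsto_pow_atTop_nhds_zero_of_lt_one
    · nlinarith [hτIcc.2]
    · nlinarith [hτpos]
  have hbound : ∀ nn : ℕ, 1 - ms (f^[nn] (dirac x)) c ≤ (1 - τ^2)^nn := by
    intro nn
    rw [hiter nn (dirac x)]
    have h1 : 1 - ms (dirac x) c ≤ 1 := by linarith [ms_nonneg (dirac x) c]
    have h2 : (0:ℝ) ≤ (1 - τ^2)^nn := pow_nonneg (by nlinarith [hτIcc.2, hτIcc.1]) _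
    nlinarith [ms_le_one (dirac x) c]
  have hnn : ∀ (nn : ℕ) (z : St), 0 ≤ 1 - ms (f^[nn] (dirac x)) c :=
    fun nn z => by linarith [ms_le_one (f^[nn] (dirac x)) c]
  have hc_lim : Tendsto (fun nn : ℕ => ms (f^[nn] (dirac x)) c) atTop (𝓝 1) := by
    have : Tendsto (fun nn : ℕ => 1 - ms (f^[nn] (dirac x)) c) atTop (𝓝 0) :=
      squeeze_zero (fun nn => hnn nn c) hbound hpow
    have h2 : Tendsto (fun nn : ℕ => 1 - (1 - ms (f^[nn] (dirac x)) c)) atTop (𝓝 (1 - 0)) :=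
      tendsto_const_nhds.sub this
    simpa using h2
  have hab_lim : ∀ z : St, z ≠ c → Tendsto (fun nn : ℕ => ms (f^[nn] (dirac x)) z) atTop (𝓝 0) := by
    intro z hzc
    apply squeeze_zero (fun nn => ms_nonneg _ _) _ (squeeze_zero (fun nn => hnn nn c) hbound hpow)
    intro nn
    have hsum := ms_sum (f^[nn] (dirac x))
    have n1 := ms_nonneg (f^[nn] (dirac x)) a
    have n2 := ms_nonneg (f^[nn] (dirac x)) b
    cases z
    · linarith
    · linarith
    · simp at hzc
  have hconv : Tendsto (fun nn : ℕ => f^[nn] (dirac x)) atTop (𝓝 (dirac c)) := by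
    apply tendsto_PM
    intro z
    by_cases hzc : z = c
    · subst hzc; rw [ms_dirac_self]; exact hc_lim
    · rw [ms_dirac_ne (Ne.symm hzc)]; exact hab_lim z hzc
  exact mem_closure_of_tendsto hconv (Filter.Eventually.of_forall (fun nn =>
    Set.mem_iUnion.mpr ⟨nn, iterate_mem_tIter (Gam K) f hstep nn (dirac x)⟩))
/-! ### limit lemmas -/

lemma diff_nonempty {K : Set ℝ} (hKacc : (0:ℝ) ∈ closure (K \ {0})) : (K \ {0}).Nonempty := by
  rcases Set.eq_empty_or_nonempty (K \ {0}) with h | h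
  · rw [h] at hKacc; simp at hKacc
  · exact h

lemma lim_le {K : Set ℝ} (hKsub : K ⊆ Icc 0 (1/2)) (hKacc : (0:ℝ) ∈ closure (K \ {0}))
    (A B : ℝ) (h : ∀ τ ∈ K, τ ≠ 0 → A * τ + B * τ^2 ≤ 0) : A ≤ 0 := by
  obtain ⟨τ, hτmem, hτlim⟩ := mem_closure_iff_seq_limit.mp hKacc
  have hτK : ∀ k, τ k ∈ K := fun k => (hτmem k).1
  have hτne : ∀ k, τ k ≠ 0 := fun k => fun hh => (hτmem k).2 (by simp [hh])
  have hτpos : ∀ k, 0 < τ k := fun k => lt_of_le_of_ne (hKsub (hτK k)).1 (Ne.symm (hτne k))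
  have hk : ∀ k, A + B * τ k ≤ 0 := by
    intro k
    nlinarith [h (τ k) (hτK k) (hτne k), hτpos k]
  have hlim : Tendsto (fun k => A + B * τ k) atTop (𝓝 (A + B * 0)) :=
    tendsto_const_nhds.add (hτlim.const_mul B)
  have := le_of_tendsto' hlim hk
  linarith

lemma pos_elem {K : Set ℝ} (hKsub : K ⊆ Icc 0 (1/2)) (hKacc : (0:ℝ) ∈ closure (K \ {0})) :
    ∃ τ ∈ K, 0 < τ := by
  obtain ⟨τ, hτK, hτ0⟩ := diff_nonempty hKacc
  exact ⟨τ, hτK, lt_of_le_of_ne (hKsub hτK).1 (Ne.symm (by simpa using hτ0))⟩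

set_option maxHeartbeats 1000000 in
/-- in the three-state counterexample game, assuming 0 is an accumulation
point of both parameter sets, a function v is excessive, depressive and satisfies P1 and
P2 if and only if it is of the form limitVal t for some t in [0,1]. -/
theorem statement8
    (I J : Set ℝ)
    (hIc : IsCompact I) (hIsub : I ⊆ Set.Icc 0 (1 / 2)) (hI0 : (0 : ℝ) ∈ I)
    (hJc : IsCompact J) (hJsub : J ⊆ Set.Icc 0 (1 / 2)) (hJ0 : (0 : ℝ) ∈ J)
    (hIacc : (0 : ℝ) ∈ closure (I \ {0}))
    (hJacc : (0 : ℝ) ∈ closure (J \ {0}))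
    (v : St × St → ℝ) :
    (Excessive (Gam I) v ∧ Depressive (Gam J) v ∧
      P1 (Gam I) pay v ∧ P2 (Gam J) pay v) ↔
    (∃ t ∈ Set.Icc (0 : ℝ) 1,
      v (St.a, St.a) = t ∧ v (St.a, St.b) = t ∧
      v (St.b, St.a) = t ∧ v (St.b, St.b) = t ∧
      v (St.a, St.c) = 1 ∧ v (St.b, St.c) = 1 ∧
      v (St.c, St.a) = 0 ∧ v (St.c, St.b) = 0 ∧ v (St.c, St.c) = 0) := by
  constructor
  · rintro ⟨hE, hD, hP1, hP2⟩
    obtain ⟨τI, hτIK, hτIpos⟩ := pos_elem hIsub hIacc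
    obtain ⟨τJ, hτJK, hτJpos⟩ := pos_elem hJsub hJacc
    -- excessive inequalities at generators
    have exc : ∀ τ ∈ I, ∀ y : St,
        (v (St.b, y) - v (St.a, y)) * τ + (v (St.c, y) - v (St.a, y)) * τ^2 ≤ 0
        ∧ (v (St.a, y) - v (St.b, y)) * τ + (v (St.c, y) - v (St.b, y)) * τ^2 ≤ 0 := by
      intro τ hτ y
      have hIcc := hIsub hτ
      have h1 := (hE St.a y).2 ⟨gA τ hIcc, gA_mem_Gam hτ hIcc, rfl⟩
      have h2 := (hE St.b y).2 ⟨gB τ hIcc, gB_mem_Gam hτ hIcc, rfl⟩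
      obtain ⟨ga1, ga2, ga3⟩ := ms_gA τ hIcc
      obtain ⟨gb1, gb2, gb3⟩ := ms_gB τ hIcc
      simp only [iXY_dirac_right, EV, ga1, ga2, ga3, gb1, gb2, gb3] at h1 h2
      constructor <;> nlinarith [h1, h2]
    have dep : ∀ τ ∈ J, ∀ x : St,
        0 ≤ (v (x, St.b) - v (x, St.a)) * τ + (v (x, St.c) - v (x, St.a)) * τ^2
        ∧ 0 ≤ (v (x, St.a) - v (x, St.b)) * τ + (v (x, St.c) - v (x, St.b)) * τ^2 := by
      intro τ hτ x
      have hJcc := hJsub hτ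
      have h1 := (hD x St.a).2 ⟨gA τ hJcc, gA_mem_Gam hτ hJcc, rfl⟩
      have h2 := (hD x St.b).2 ⟨gB τ hJcc, gB_mem_Gam hτ hJcc, rfl⟩
      obtain ⟨ga1, ga2, ga3⟩ := ms_gA τ hJcc
      obtain ⟨gb1, gb2, gb3⟩ := ms_gB τ hJcc
      simp only [iXY_dirac_left, EV, ga1, ga2, ga3, gb1, gb2, gb3] at h1 h2
      constructor <;> nlinarith [h1, h2]
    have rowEq : ∀ y, v (St.a, y) = v (St.b, y) := by
      intro y
      have h1 : v (St.b, y) - v (St.a, y) ≤ 0 :=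
        lim_le hIsub hIacc _ _ (fun τ hτ _ => (exc τ hτ y).1)
      have h2 : v (St.a, y) - v (St.b, y) ≤ 0 :=
        lim_le hIsub hIacc _ _ (fun τ hτ _ => (exc τ hτ y).2)
      linarith
    have colEq : ∀ x, v (x, St.a) = v (x, St.b) := by
      intro x
      have h1 : -(v (x, St.b) - v (x, St.a)) ≤ 0 := by
        apply lim_le hJsub hJacc _ (-(v (x, St.c) - v (x, St.a)))
        intro τ hτ _
        nlinarith [(dep τ hτ x).1]
      have h2 : -(v (x, St.a) - v (x, St.b)) ≤ 0 := by
        apply lim_le hJsub hJacc _ (-(v (x, St.c) - v (x, St.b)))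
        intro τ hτ _
        nlinarith [(dep τ hτ x).2]
      linarith
    have rowC : ∀ y, v (St.c, y) ≤ v (St.a, y) := by
      intro y
      have h := (exc τI hτIK y).1
      have hr := rowEq y
      nlinarith [h, hr, mul_pos hτIpos hτIpos]
    have colC : ∀ x, v (x, St.a) ≤ v (x, St.c) := by
      intro x
      have h := (dep τJ hτJK x).1
      have hc := colEq x
      nlinarith [h, hc, mul_pos hτJpos hτJpos]
    -- v(c,c) = 0
    have vcc : v (St.c, St.c) = 0 := by
      obtain ⟨p, hp, hv1, hv2⟩ := hP1 St.c St.c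
      obtain ⟨pa0, pb0, pc1⟩ := reach_c_ms I p hp
      simp only [iXY_dirac_right] at hv1 hv2
      simp only [EV, pa0, pb0, pc1] at hv1 hv2
      obtain ⟨q, hq, hw1, hw2⟩ := hP2 St.c St.c
      obtain ⟨qa0, qb0, qc1⟩ := reach_c_ms J q hq
      simp only [iXY_dirac_left] at hw1 hw2
      simp only [EV, qa0, qb0, qc1] at hw1 hw2
      simp only [pay] at hv2 hw2
      norm_num at hv2 hw2
      linarith
    -- v(a,c) = 1
    have vac : v (St.a, St.c) = 1 := by
      have hge : 1 ≤ v (St.a, St.c) := by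
        obtain ⟨q, hq, hw1, hw2⟩ := hP2 St.a St.c
        obtain ⟨qa0, qb0, qc1⟩ := reach_c_ms J q hq
        simp only [iXY_dirac_left] at hw1 hw2
        simp [EV, pay, qa0, qb0, qc1] at hw2
        linarith
      have hle : v (St.a, St.c) ≤ 1 := by
        obtain ⟨p, hp, hu1, hu2⟩ := hP1 St.a St.c
        simp only [iXY_dirac_right] at hu1 hu2
        simp only [EV] at hu1
        simp [EV, pay] at hu2
        have hsum := ms_sum p
        have nc := ms_nonneg p St.c
        linarith [hu1, hu2]
      linarith
    have vca : v (St.c, St.a) = 0 := by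
      have hle : v (St.c, St.a) ≤ 0 := by
        have := colC St.c
        linarith [vcc]
      obtain ⟨q, hq, hz1, hz2⟩ := hP2 St.c St.a
      simp only [iXY_dirac_left] at hz1 hz2
      simp only [EV] at hz1
      simp [EV, pay] at hz2
      have na := ms_nonneg q St.a
      have nb := ms_nonneg q St.b
      linarith [hz1, hz2]
    have hs0 : 0 ≤ v (St.a, St.a) := by have := rowC St.a; linarith
    have hs1 : v (St.a, St.a) ≤ 1 := by have := colC St.a; linarith [vac]
    refine ⟨v (St.a, St.a), ⟨hs0, hs1⟩, rfl, (colEq St.a).symm, (rowEq St.a).symm, ?_, vac,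
      (rowEq St.c) ▸ vac, vca, (colEq St.c) ▸ vca, vcc⟩
    rw [← rowEq St.b, ← colEq St.a]
  · rintro ⟨s, ⟨hs0, hs1⟩, e1, e2, e3, e4, e5, e6, e7, e8, e9⟩
    have hJne : (J \ {0}).Nonempty := diff_nonempty hJacc
    refine ⟨?_, ?_, ?_, ?_⟩
    -- Excessive
    · intro x y
      constructor
      · exact ⟨dirac x, dirac_mem_Gam hI0 x, iXY_dirac_dirac v x y⟩
      · rintro rv ⟨p, hp, rfl⟩
        simp only [iXY_dirac_right]
        cases x with
        | c =>
          have hpc : p = dirac c := hp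
          rw [hpc]
          have : EV (fun x' => v (x', y)) (dirac c) = v (St.c, y) := by
            simp [EV, ms_dirac]
          rw [this]
        | a =>
          refine hull_le I (fun x' => v (x', y)) (v (St.a, y)) (fun p => rfl) ?_ p hp
          intro τ hτ
          obtain ⟨ht0, ht2⟩ := hIsub hτ
          cases y with
          | a => simp only [e1, e3, e7]; nlinarith
          | b => simp only [e2, e4, e8]; nlinarith
          | c => simp only [e5, e6, e9]; nlinarith
        | b =>
          refine hull_le I (fun x' => v (x', y)) (v (St.b, y)) (fun p => by simp [EV]; ring) ?_ p hp
          intro τ hτ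
          obtain ⟨ht0, ht2⟩ := hIsub hτ
          cases y with
          | a => simp only [e1, e3, e7]; nlinarith
          | b => simp only [e2, e4, e8]; nlinarith
          | c => simp only [e5, e6, e9]; nlinarith
    -- Depressive
    · intro x y
      constructor
      · exact ⟨dirac y, dirac_mem_Gam hJ0 y, iXY_dirac_dirac v x y⟩
      · rintro rv ⟨q, hq, rfl⟩
        simp only [iXY_dirac_left]
        cases y with
        | c =>
          have hqc : q = dirac c := hq
          rw [hqc]
          have : EV (fun y' => v (x, y')) (dirac c) = v (x, St.c) := by
            simp [EV, ms_dirac]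
          rw [this]
        | a =>
          refine hull_ge J (fun y' => v (x, y')) (v (x, St.a)) (fun q => rfl) ?_ q hq
          intro τ hτ
          obtain ⟨ht0, ht2⟩ := hJsub hτ
          cases x with
          | a => simp only [e1, e2, e5]; nlinarith
          | b => simp only [e3, e4, e6]; nlinarith
          | c => simp only [e7, e8, e9]; nlinarith
        | b =>
          refine hull_ge J (fun y' => v (x, y')) (v (x, St.b)) (fun q => by simp [EV]; ring) ?_ q hq
          intro τ hτ
          obtain ⟨ht0, ht2⟩ := hJsub hτ
          cases x with
          | a => simp only [e1, e2, e5]; nlinarith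
          | b => simp only [e3, e4, e6]; nlinarith
          | c => simp only [e7, e8, e9]; nlinarith
    -- P1
    · intro x y
      cases x with
      | c =>
        refine ⟨dirac St.c, dirac_mem_reach _ St.c, by simp [iXY_dirac_dirac], ?_⟩
        simp only [iXY_dirac_dirac]
        cases y <;> simp [pay, e7, e8, e9]
      | a =>
        cases y with
        | c =>
          refine ⟨dirac St.a, dirac_mem_reach _ St.a, by simp [iXY_dirac_dirac], ?_⟩
          simp only [iXY_dirac_dirac]
          simp [pay, e5]
        | a =>
          have hms := ms_mk3r (1-s) s 0 (by linarith) hs0 le_rfl (by ring)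
          set p := mk3r (1-s) s 0 (by linarith) hs0 le_rfl (by ring) with hpdef
          have hpmem : p ∈ reach (Gam I) St.a :=
            reach_xy (Or.inl ⟨rfl, rfl⟩) I hI0 hIsub hIacc s ⟨hs0, hs1⟩ p
              hms.1 hms.2.1 hms.2.2
          refine ⟨p, hpmem, ?_, ?_⟩ <;>
            simp [iXY_dirac_right, EV, hms.1, hms.2.1, hms.2.2, e1, e3, e7, pay] <;>
            ring_nf <;> try nlinarith [hs0, hs1]
        | b =>
          have hms := ms_mk3r s (1-s) 0 hs0 (by linarith) le_rfl (by ring)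
          set p := mk3r s (1-s) 0 hs0 (by linarith) le_rfl (by ring) with hpdef
          have hpmem : p ∈ reach (Gam I) St.a := by
            apply reach_xy (Or.inl ⟨rfl, rfl⟩) I hI0 hIsub hIacc (1-s) ⟨by linarith, by linarith⟩ p
            · rw [hms.1]; ring
            · exact hms.2.1
            · exact hms.2.2
          refine ⟨p, hpmem, ?_, ?_⟩ <;>
            simp [iXY_dirac_right, EV, hms.1, hms.2.1, hms.2.2, e2, e4, e8, pay] <;>
            ring_nf <;> try nlinarith [hs0, hs1]
      | b =>
        cases y with
        | c =>
          refine ⟨dirac St.b, dirac_mem_reach _ St.b, by simp [iXY_dirac_dirac], ?_⟩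
          simp only [iXY_dirac_dirac]
          simp [pay, e6]
        | a =>
          have hms := ms_mk3r (1-s) s 0 (by linarith) hs0 le_rfl (by ring)
          set p := mk3r (1-s) s 0 (by linarith) hs0 le_rfl (by ring) with hpdef
          have hpmem : p ∈ reach (Gam I) St.b := by
            apply reach_xy (Or.inr ⟨rfl, rfl⟩) I hI0 hIsub hIacc (1-s)
              ⟨by linarith, by linarith⟩ p
            · rw [hms.2.1]; ring
            · exact hms.1
            · exact hms.2.2
          refine ⟨p, hpmem, ?_, ?_⟩ <;>
            simp [iXY_dirac_right, EV, hms.1, hms.2.1, hms.2.2, e1, e3, e7, pay] <;>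
            ring_nf <;> try nlinarith [hs0, hs1]
        | b =>
          have hms := ms_mk3r s (1-s) 0 hs0 (by linarith) le_rfl (by ring)
          set p := mk3r s (1-s) 0 hs0 (by linarith) le_rfl (by ring) with hpdef
          have hpmem : p ∈ reach (Gam I) St.b := by
            apply reach_xy (Or.inr ⟨rfl, rfl⟩) I hI0 hIsub hIacc s ⟨hs0, hs1⟩ p
            · exact hms.2.1
            · exact hms.1
            · exact hms.2.2
          refine ⟨p, hpmem, ?_, ?_⟩ <;>
            simp [iXY_dirac_right, EV, hms.1, hms.2.1, hms.2.2, e2, e4, e8, pay] <;>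
            ring_nf <;> try nlinarith [hs0, hs1]
    -- P2
    · intro x y
      cases y with
      | c =>
        refine ⟨dirac St.c, dirac_mem_reach _ St.c, by simp [iXY_dirac_dirac], ?_⟩
        simp only [iXY_dirac_dirac]
        cases x <;> simp [pay, e5, e6, e9]
      | a =>
        cases x with
        | c =>
          refine ⟨dirac St.c, reach_diracC J hJ0 hJsub hJne St.a, ?_, ?_⟩ <;>
            simp [iXY_dirac_dirac, pay, e7, e9]
        | a =>
          have hms := ms_mk3r (1-s) s 0 (by linarith) hs0 le_rfl (by ring)
          set q := mk3r (1-s) s 0 (by linarith) hs0 le_rfl (by ring) with hqdef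
          have hqmem : q ∈ reach (Gam J) St.a :=
            reach_xy (Or.inl ⟨rfl, rfl⟩) J hJ0 hJsub hJacc s ⟨hs0, hs1⟩ q
              hms.1 hms.2.1 hms.2.2
          refine ⟨q, hqmem, ?_, ?_⟩ <;>
            simp [iXY_dirac_left, EV, hms.1, hms.2.1, hms.2.2, e1, e2, e5, pay] <;>
            ring_nf <;> try nlinarith [hs0, hs1]
        | b =>
          have hms := ms_mk3r s (1-s) 0 hs0 (by linarith) le_rfl (by ring)
          set q := mk3r s (1-s) 0 hs0 (by linarith) le_rfl (by ring) with hqdef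
          have hqmem : q ∈ reach (Gam J) St.a := by
            apply reach_xy (Or.inl ⟨rfl, rfl⟩) J hJ0 hJsub hJacc (1-s)
              ⟨by linarith, by linarith⟩ q
            · rw [hms.1]; ring
            · exact hms.2.1
            · exact hms.2.2
          refine ⟨q, hqmem, ?_, ?_⟩ <;>
            simp [iXY_dirac_left, EV, hms.1, hms.2.1, hms.2.2, e3, e4, e6, pay] <;>
            ring_nf <;> try nlinarith [hs0, hs1]
      | b =>
        cases x with
        | c =>
          refine ⟨dirac St.c, reach_diracC J hJ0 hJsub hJne St.b, ?_, ?_⟩ <;>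
            simp [iXY_dirac_dirac, pay, e8, e9]
        | a =>
          have hms := ms_mk3r (1-s) s 0 (by linarith) hs0 le_rfl (by ring)
          set q := mk3r (1-s) s 0 (by linarith) hs0 le_rfl (by ring) with hqdef
          have hqmem : q ∈ reach (Gam J) St.b := by
            apply reach_xy (Or.inr ⟨rfl, rfl⟩) J hJ0 hJsub hJacc (1-s)
              ⟨by linarith, by linarith⟩ q
            · rw [hms.2.1]; ring
            · exact hms.1
            · exact hms.2.2
          refine ⟨q, hqmem, ?_, ?_⟩ <;>
            simp [iXY_dirac_left, EV, hms.1, hms.2.1, hms.2.2, e1, e2, e5, pay] <;>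
            ring_nf <;> try nlinarith [hs0, hs1]
        | b =>
          have hms := ms_mk3r s (1-s) 0 hs0 (by linarith) le_rfl (by ring)
          set q := mk3r s (1-s) 0 hs0 (by linarith) le_rfl (by ring) with hqdef
          have hqmem : q ∈ reach (Gam J) St.b := by
            apply reach_xy (Or.inr ⟨rfl, rfl⟩) J hJ0 hJsub hJacc s ⟨hs0, hs1⟩ q
            · exact hms.2.1
            · exact hms.1
            · exact hms.2.2
          refine ⟨q, hqmem, ?_, ?_⟩ <;>
            simp [iXY_dirac_left, EV, hms.1, hms.2.1, hms.2.2, e3, e4, e6, pay] <;>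
            ring_nf <;> try nlinarith [hs0, hs1]

end GG
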